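/- The BCH-recursion map χ: A_1 → A_1 (the unique map with a = C(P(χ(a)), P̃(χ(a)))) is a bijection, with inverse χ^{-1}(a) = C(P(a), P̃(a)) = a + BCH(P(a), P̃(a)). -/

import Mathlib

open scoped BigOperators

noncomputable def expS (K : Type*) {A : Type*} [Field K] [CharZero K] [Ring A] [Algebra K A]
    [UniformSpace A] (a : A) : A :=
  ∑' n : ℕ, ((n.factorial : K)⁻¹) • a ^ n

noncomputable def logS (K : Type*) {A : Type*} [Field K] [CharZero K] [Ring A] [Algebra K A]
    [UniformSpace A] (a : A) : A :=
  ∑' n : ℕ, (((-1 : K) ^ n) * ((n : K) + 1)⁻¹) • (a - 1) ^ (n + 1)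

noncomputable def BCHs (K : Type*) {A : Type*} [Field K] [CharZero K] [Ring A] [Algebra K A]
    [UniformSpace A] (x y : A) : A :=
  logS K (expS K x * expS K y) - x - y

/-- A complete decreasing multiplicative filtration defining the topology of `A`. -/
def IsCompleteFiltration (K : Type*) {A : Type*} [Field K] [CharZero K] [Ring A] [Algebra K A]
    [UniformSpace A] (F : ℕ → Submodule K A) : Prop :=
  F 0 = ⊤ ∧ (∀ n, F (n + 1) ≤ F n) ∧
    (∀ m n : ℕ, ∀ x ∈ F m, ∀ y ∈ F n, x * y ∈ F (m + n)) ∧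
    (∀ n, IsOpen ((F n : Set A))) ∧
    (∀ U ∈ nhds (0 : A), ∃ n, ((F n : Set A)) ⊆ U)

variable {K : Type*} [Field K] [CharZero K] {A : Type*} [Ring A] [Algebra K A]
  [UniformSpace A] [CompleteSpace A] [T2Space A] [IsTopologicalRing A]
  [IsUniformAddGroup A]

section BCHRecAux

variable {F : ℕ → Submodule K A}

lemma F_mono (hF : IsCompleteFiltration K F) : ∀ {m n : ℕ}, m ≤ n → F n ≤ F m := by
  intro m n h
  induction n with
  | zero => obtain rfl := Nat.le_zero.mp h; exact le_rfl
  | succ n ih =>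
    rcases Nat.eq_or_lt_of_le h with rfl | h'
    · exact le_rfl
    · exact (hF.2.1 n).trans (ih (Nat.lt_succ_iff.mp h'))

lemma F_closed (hF : IsCompleteFiltration K F) (n : ℕ) : IsClosed ((F n : Set A)) :=
  AddSubgroup.isClosed_of_isOpen (F n).toAddSubgroup (hF.2.2.2.1 n)

lemma F_inter_zero (hF : IsCompleteFiltration K F) {b : A} (h : ∀ n, b ∈ F n) : b = 0 := by
  by_contra hb
  have hU : ({b}ᶜ : Set A) ∈ nhds (0 : A) :=
    (isOpen_compl_singleton).mem_nhds (by simpa using (Ne.symm hb))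
  obtain ⟨n, hn⟩ := hF.2.2.2.2 _ hU
  exact hn (h n) rfl

lemma summable_of_mem (hF : IsCompleteFiltration K F) {f : ℕ → A}
    (hf : ∀ n, f n ∈ F n) : Summable f := by
  rw [summable_iff_vanishing]
  intro e he
  obtain ⟨n, hn⟩ := hF.2.2.2.2 e he
  refine ⟨Finset.range n, fun t ht => hn ?_⟩
  refine sum_mem fun i hi => ?_
  have hni : n ≤ i := by
    by_contra hlt
    exact (Finset.disjoint_left.mp ht) hi (Finset.mem_range.mpr (Nat.lt_of_not_le hlt))
  exact F_mono hF hni (hf i)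

lemma tsum_mem_of_mem (hF : IsCompleteFiltration K F) {f : ℕ → A} {n : ℕ}
    (h : ∀ k, f k ∈ F n) : ∑' k, f k ∈ F n := by
  by_cases hs : Summable f
  · exact (F_closed hF n).mem_of_tendsto hs.hasSum
      (Filter.Eventually.of_forall fun s => sum_mem fun i _ => h i)
  · rw [tsum_eq_zero_of_not_summable hs]; exact (F n).zero_mem

lemma pow_mem_F (hF : IsCompleteFiltration K F) {x : A} (hx : x ∈ F 1) (k : ℕ) :
    x ^ k ∈ F k := by
  induction k with
  | zero => rw [pow_zero]; rw [show F 0 = ⊤ from hF.1]; trivial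
  | succ k ih => rw [pow_succ]; exact hF.2.2.1 k 1 _ ih _ hx

lemma mul_mem_F0 (hF : IsCompleteFiltration K F) (x : A) {y : A} {n : ℕ} (hy : y ∈ F n) :
    x * y ∈ F n := by
  have hx : x ∈ F 0 := by rw [show F 0 = ⊤ from hF.1]; trivial
  simpa using hF.2.2.1 0 n x hx y hy

lemma mul_mem_F0' (hF : IsCompleteFiltration K F) {x : A} {n : ℕ} (hx : x ∈ F n) (y : A) :
    x * y ∈ F n := by
  have hy : y ∈ F 0 := by rw [show F 0 = ⊤ from hF.1]; trivial
  simpa using hF.2.2.1 n 0 x hx y hy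

lemma pow_sub_pow_mem (hF : IsCompleteFiltration K F) {x x' : A} (hx : x ∈ F 1)
    (hx' : x' ∈ F 1) {n : ℕ} (h : x - x' ∈ F n) (k : ℕ) :
    x ^ (k + 1) - x' ^ (k + 1) ∈ F (n + k) := by
  induction k with
  | zero => simpa using h
  | succ k ih =>
    have key : x ^ (k + 1 + 1) - x' ^ (k + 1 + 1)
        = x * (x ^ (k + 1) - x' ^ (k + 1)) + (x - x') * x' ^ (k + 1) := by
      rw [mul_sub, sub_mul, pow_succ' x (k + 1), pow_succ' x' (k + 1)]; abel
    rw [key]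
    refine add_mem ?_ ?_
    · exact F_mono hF (by omega) (hF.2.2.1 1 (n + k) x hx _ ih)
    · exact hF.2.2.1 n (k + 1) _ h _ (pow_mem_F hF hx' (k + 1))

lemma summable_expS (hF : IsCompleteFiltration K F) {x : A} (hx : x ∈ F 1) :
    Summable (fun k : ℕ => ((k.factorial : K)⁻¹) • x ^ k) :=
  summable_of_mem hF fun k => Submodule.smul_mem _ _ (pow_mem_F hF hx k)

lemma summable_logS (hF : IsCompleteFiltration K F) {a : A} (ha : a - 1 ∈ F 1) :
    Summable (fun m : ℕ => (((-1 : K) ^ m) * ((m : K) + 1)⁻¹) • (a - 1) ^ (m + 1)) :=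
  summable_of_mem hF fun m => Submodule.smul_mem _ _
    (F_mono hF (Nat.le_succ m) (pow_mem_F hF ha (m + 1)))

lemma expS_zero : expS K (0 : A) = 1 := by
  rw [expS, tsum_eq_single 0 (fun b hb => by simp [zero_pow hb])]
  simp

/-- Key difference estimate for `expS`. -/
lemma expS_sub_mem (hF : IsCompleteFiltration K F) {x x' : A} (hx : x ∈ F 1)
    (hx' : x' ∈ F 1) {n : ℕ} (h : x - x' ∈ F n) :
    expS K x - expS K x' - (x - x') ∈ F (n + 1) := by
  have hfx := summable_expS hF hx
  have hfx' := summable_expS hF hx'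
  set g : ℕ → A := fun k => ((k.factorial : K)⁻¹) • x ^ k - ((k.factorial : K)⁻¹) • x' ^ k
    with hgdef
  have hg : Summable g := hfx.sub hfx'
  have hdiff : expS K x - expS K x' = ∑' k : ℕ, g k := by
    rw [expS, expS]; exact (Summable.tsum_sub hfx hfx').symm
  have hg1 : Summable (fun k => g (k + 1)) := (summable_nat_add_iff 1).mpr hg
  have h0 : ∑' k, g k = g 0 + ∑' k, g (k + 1) := Summable.tsum_eq_zero_add hg
  have h1 : ∑' k, g (k + 1) = g 1 + ∑' k, g (k + 1 + 1) := Summable.tsum_eq_zero_add hg1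
  have hg0 : g 0 = 0 := by simp [hgdef]
  have hg1' : g 1 = x - x' := by simp [hgdef]
  have hkey : expS K x - expS K x' - (x - x') = ∑' k, g (k + 1 + 1) := by
    rw [hdiff, h0, h1, hg0, hg1']; abel
  rw [hkey]
  refine tsum_mem_of_mem hF fun k => ?_
  have hgk : g (k + 1 + 1) = (((k + 1 + 1).factorial : K)⁻¹)
      • (x ^ (k + 1 + 1) - x' ^ (k + 1 + 1)) := by
    simp [hgdef, smul_sub]
  rw [hgk]
  exact Submodule.smul_mem _ _
    (F_mono hF (by omega) (pow_sub_pow_mem hF hx hx' h (k + 1)))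

lemma expS_sub_one_sub_self_mem (hF : IsCompleteFiltration K F) {x : A} (hx : x ∈ F 1) :
    expS K x - 1 - x ∈ F 2 := by
  have h := expS_sub_mem hF hx (Submodule.zero_mem _) (n := 1) (by simpa using hx)
  rw [expS_zero] at h
  simpa using h

lemma expS_sub_one_mem (hF : IsCompleteFiltration K F) {x : A} (hx : x ∈ F 1) :
    expS K x - 1 ∈ F 1 := by
  have h2 := expS_sub_one_sub_self_mem hF hx
  have hkey : expS K x - 1 = (expS K x - 1 - x) + x := by abel
  rw [hkey]
  exact add_mem (F_mono hF (by omega) h2) hx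

lemma expS_sub_expS_mem (hF : IsCompleteFiltration K F) {x x' : A} (hx : x ∈ F 1)
    (hx' : x' ∈ F 1) {n : ℕ} (h : x - x' ∈ F n) :
    expS K x - expS K x' ∈ F n := by
  have hkey : expS K x - expS K x' = (expS K x - expS K x' - (x - x')) + (x - x') := by abel
  rw [hkey]
  exact add_mem (F_mono hF (by omega) (expS_sub_mem hF hx hx' h)) h

/-- Key difference estimate for `logS` near `1`. -/
lemma logS_sub_mem (hF : IsCompleteFiltration K F) {a b : A} (ha : a - 1 ∈ F 1)
    (hb : b - 1 ∈ F 1) {n : ℕ} (h : a - b ∈ F n) :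
    logS K a - logS K b - (a - b) ∈ F (n + 1) := by
  have hfa := summable_logS hF ha
  have hfb := summable_logS hF hb
  set g : ℕ → A := fun m => (((-1 : K) ^ m) * ((m : K) + 1)⁻¹) • (a - 1) ^ (m + 1)
    - (((-1 : K) ^ m) * ((m : K) + 1)⁻¹) • (b - 1) ^ (m + 1) with hgdef
  have hg : Summable g := hfa.sub hfb
  have hdiff : logS K a - logS K b = ∑' m, g m := by
    rw [logS, logS]; exact (Summable.tsum_sub hfa hfb).symm
  have h0 : ∑' m, g m = g 0 + ∑' m, g (m + 1) := Summable.tsum_eq_zero_add hg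
  have hg0 : g 0 = a - b := by simp [hgdef]
  have hab : (a - 1) - (b - 1) ∈ F n := by
    have heq : (a - 1) - (b - 1) = a - b := by abel
    rw [heq]; exact h
  have hkey : logS K a - logS K b - (a - b) = ∑' m, g (m + 1) := by
    rw [hdiff, h0, hg0]; abel
  rw [hkey]
  refine tsum_mem_of_mem hF fun m => ?_
  have hgm : g (m + 1) = (((-1 : K) ^ (m + 1)) * (((m + 1 : ℕ) : K) + 1)⁻¹)
      • ((a - 1) ^ (m + 1 + 1) - (b - 1) ^ (m + 1 + 1)) := by
    simp [hgdef, smul_sub]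
  rw [hgm]
  exact Submodule.smul_mem _ _
    (F_mono hF (by omega) (pow_sub_pow_mem hF ha hb hab (m + 1)))

lemma E_sub_one_mem (hF : IsCompleteFiltration K F) {x y : A} (hx : x ∈ F 1) (hy : y ∈ F 1) :
    expS K x * expS K y - 1 ∈ F 1 := by
  have hvx := expS_sub_one_mem hF hx
  have hvy := expS_sub_one_mem hF hy
  have key : expS K x * expS K y - 1
      = (expS K x - 1) + (expS K y - 1) + (expS K x - 1) * (expS K y - 1) := by noncomm_ring
  rw [key]
  exact add_mem (add_mem hvx hvy) (F_mono hF (by omega) (hF.2.2.1 1 1 _ hvx _ hvy))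

lemma E_sub_E_mem (hF : IsCompleteFiltration K F) {x y x' y' : A} (hx : x ∈ F 1)
    (hx' : x' ∈ F 1) (hy : y ∈ F 1) (hy' : y' ∈ F 1) {n : ℕ}
    (hxx : x - x' ∈ F n) (hyy : y - y' ∈ F n) :
    expS K x * expS K y - expS K x' * expS K y' ∈ F n := by
  have key : expS K x * expS K y - expS K x' * expS K y'
      = expS K x * (expS K y - expS K y') + (expS K x - expS K x') * expS K y' := by noncomm_ring
  rw [key]
  exact add_mem (mul_mem_F0 hF _ (expS_sub_expS_mem hF hy hy' hyy))
    (mul_mem_F0' hF (expS_sub_expS_mem hF hx hx' hxx) _)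

/-- Key difference estimate for `BCHs`. -/
lemma BCHs_sub_mem (hF : IsCompleteFiltration K F) {x y x' y' : A} (hx : x ∈ F 1)
    (hx' : x' ∈ F 1) (hy : y ∈ F 1) (hy' : y' ∈ F 1) {n : ℕ}
    (hxx : x - x' ∈ F n) (hyy : y - y' ∈ F n) :
    BCHs K x y - BCHs K x' y' ∈ F (n + 1) := by
  set E := expS K x * expS K y with hE
  set E' := expS K x' * expS K y' with hE'
  have hE1 : E - 1 ∈ F 1 := E_sub_one_mem hF hx hy
  have hE1' : E' - 1 ∈ F 1 := E_sub_one_mem hF hx' hy'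
  have hEE : E - E' ∈ F n := E_sub_E_mem hF hx hx' hy hy' hxx hyy
  have hlog : logS K E - logS K E' - (E - E') ∈ F (n + 1) :=
    logS_sub_mem hF hE1 hE1' hEE
  -- (E - E') - (x - x') - (y - y') ∈ F (n+1)
  have hsx : expS K x - expS K x' - (x - x') ∈ F (n + 1) := expS_sub_mem hF hx hx' hxx
  have hsy : expS K y - expS K y' - (y - y') ∈ F (n + 1) := expS_sub_mem hF hy hy' hyy
  have hprod : (expS K x - 1) * (expS K y - 1) - (expS K x' - 1) * (expS K y' - 1)
      ∈ F (n + 1) := by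
    have key : (expS K x - 1) * (expS K y - 1) - (expS K x' - 1) * (expS K y' - 1)
        = (expS K x - 1) * (expS K y - expS K y')
          + (expS K x - expS K x') * (expS K y' - 1) := by noncomm_ring
    rw [key]
    refine add_mem ?_ ?_
    · have := hF.2.2.1 1 n _ (expS_sub_one_mem hF hx) _ (expS_sub_expS_mem hF hy hy' hyy)
      exact F_mono hF (by omega) this
    · have := hF.2.2.1 n 1 _ (expS_sub_expS_mem hF hx hx' hxx) _ (expS_sub_one_mem hF hy')
      exact this
  have hmain : (E - E') - (x - x') - (y - y') ∈ F (n + 1) := by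
    have key : (E - E') - (x - x') - (y - y')
        = (expS K x - expS K x' - (x - x')) + (expS K y - expS K y' - (y - y'))
          + ((expS K x - 1) * (expS K y - 1) - (expS K x' - 1) * (expS K y' - 1)) := by
      rw [hE, hE']; noncomm_ring
    rw [key]
    exact add_mem (add_mem hsx hsy) hprod
  have key : BCHs K x y - BCHs K x' y'
      = (logS K E - logS K E' - (E - E')) + ((E - E') - (x - x') - (y - y')) := by
    rw [BCHs, BCHs, ← hE, ← hE']; abel
  rw [key]
  exact add_mem hlog hmain

lemma BCHs_mem (hF : IsCompleteFiltration K F) {x y : A} (hx : x ∈ F 1) (hy : y ∈ F 1) :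
    BCHs K x y ∈ F 2 := by
  have h := BCHs_sub_mem hF hx (Submodule.zero_mem _) hy (Submodule.zero_mem _)
    (n := 1) (by simpa using hx) (by simpa using hy)
  have hz : BCHs K (0 : A) (0 : A) = 0 := by
    rw [BCHs, expS_zero, mul_one, logS]
    rw [tsum_eq_single 0 (fun b hb => by simp)]
    simp
  rw [hz] at h
  simpa using h

end BCHRecAux

theorem stmt3 (F : ℕ → Submodule K A) (hF : IsCompleteFiltration K F)
    (P : A →ₗ[K] A) (hP : ∀ n, ∀ x ∈ F n, P x ∈ F n)
    (χ : A → A) (hχmem : ∀ a ∈ F 1, χ a ∈ F 1)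
    (hχ : ∀ a ∈ F 1, χ a = a - BCHs K (P (χ a)) (χ a - P (χ a))) :
    Set.BijOn χ ((F 1 : Set A)) ((F 1 : Set A)) ∧
    (∀ a ∈ F 1, logS K (expS K (P (χ a)) * expS K (χ a - P (χ a))) = a) ∧
    (∀ a ∈ F 1, a + BCHs K (P a) (a - P a) = logS K (expS K (P a) * expS K (a - P a))) ∧
    (∀ a ∈ F 1, χ (a + BCHs K (P a) (a - P a)) = a) := by
  -- the "inverse" map
  set ψ : A → A := fun a => a + BCHs K (P a) (a - P a) with hψdef
  have hPmem : ∀ a ∈ F 1, P a ∈ F 1 := fun a ha => hP 1 a ha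
  have hPmem' : ∀ a ∈ F 1, a - P a ∈ F 1 := fun a ha => sub_mem ha (hP 1 a ha)
  have hψmem : ∀ a ∈ F 1, ψ a ∈ F 1 := by
    intro a ha
    exact add_mem ha (F_mono hF (by omega) (BCHs_mem hF (hPmem a ha) (hPmem' a ha)))
  -- third bullet: pure algebra
  have third : ∀ a ∈ (F 1 : Submodule K A),
      a + BCHs K (P a) (a - P a) = logS K (expS K (P a) * expS K (a - P a)) := by
    intro a _
    rw [BCHs]; abel
  -- second bullet: from the fixed point equation
  have second : ∀ a ∈ (F 1 : Submodule K A),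
      logS K (expS K (P (χ a)) * expS K (χ a - P (χ a))) = a := by
    intro a ha
    have h := hχ a ha
    rw [BCHs] at h
    set L := logS K (expS K (P (χ a)) * expS K (χ a - P (χ a))) with hL
    have h5 : a - (L - P (χ a) - (χ a - P (χ a))) - χ a = 0 := by
      rw [← h]; simp
    have h4 : a - L = 0 := by
      calc a - L = a - (L - P (χ a) - (χ a - P (χ a))) - χ a := by abel
        _ = 0 := h5
    exact (sub_eq_zero.mp h4).symm
  -- ψ ∘ χ = id on F 1
  have hψχ : ∀ a ∈ (F 1 : Submodule K A), ψ (χ a) = a := by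
    intro a ha
    rw [hψdef]
    dsimp only
    rw [third (χ a) (hχmem a ha)]
    exact second a ha
  -- ψ is injective on F 1
  have ψinj : ∀ b ∈ (F 1 : Submodule K A), ∀ c ∈ (F 1 : Submodule K A), ψ b = ψ c → b = c := by
    intro b hb c hc hbc
    have key : ∀ n, b - c ∈ F n := by
      intro n
      induction n with
      | zero => rw [show F 0 = ⊤ from hF.1]; trivial
      | succ n ih =>
        have hψeq : b + BCHs K (P b) (b - P b) = c + BCHs K (P c) (c - P c) := by
          have := hbc
          rw [hψdef] at this
          exact this
        have h0 : (b + BCHs K (P b) (b - P b)) - (c + BCHs K (P c) (c - P c)) = 0 := by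
          rw [hψeq, sub_self]
        have heq : b - c = (BCHs K (P c) (c - P c) - BCHs K (P b) (b - P b))
            + ((b + BCHs K (P b) (b - P b)) - (c + BCHs K (P c) (c - P c))) := by abel
        rw [heq, h0, add_zero]
        have hx : P c - P b ∈ F n := by
          have := hP n _ ih
          rw [map_sub] at this
          simpa using neg_mem this
        have hy : (c - P c) - (b - P b) ∈ F n := by
          have h1 : (c - P c) - (b - P b) = -((b - c) - (P b - P c)) := by abel
          rw [h1]
          refine neg_mem (sub_mem ih ?_)
          have := hP n _ ih
          rwa [map_sub] at this
        exact BCHs_sub_mem hF (hPmem c hc) (hPmem b hb) (hPmem' c hc) (hPmem' b hb) hx hy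
    exact sub_eq_zero.mp (F_inter_zero hF key)
  -- fourth bullet: χ ∘ ψ = id on F 1
  have fourth : ∀ a ∈ (F 1 : Submodule K A), χ (ψ a) = a := by
    intro a ha
    have hb : ψ a ∈ F 1 := hψmem a ha
    exact ψinj (χ (ψ a)) (hχmem _ hb) a ha (by rw [hψχ (ψ a) hb])
  refine ⟨⟨fun a ha => hχmem a ha, ?_, ?_⟩, second, third, fourth⟩
  · intro a ha b hb h
    rw [← hψχ a ha, ← hψχ b hb, h]
  · intro b hb
    exact ⟨ψ b, hψmem b hb, fourth b hb⟩
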